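/- Let $\Delta$ be a bounded self-adjoint multiplication operator on $L^2(\Omega)$ with $\operatorname{essinf} \Delta > 0$, and let $K$ be a compact self-adjoint operator on $L^2(\Omega)$. Set $S = \Delta + K$ and $T = -\Delta^{-1/2} K \Delta^{-1/2}$. Then $T$ is compact self-adjoint, $\Delta^{-1/2} S \Delta^{-1/2} = I - T$, and the number of negative eigenvalues of $S$ equals the number of eigenvalues of $T$ greater than $1$: $N(0;S) = n(1;T)$. -/

import Mathlib

open MeasureTheory ContinuousLinearMap

/-- `negCount T` : the dimension of the spectral subspace for `(-∞,0)` of a bounded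
self-adjoint operator, expressed variationally. -/
noncomputable def negCount {H : Type*} [NormedAddCommGroup H] [InnerProductSpace ℂ H]
    (T : H →L[ℂ] H) : Cardinal :=
  ⨆ L : {L : Submodule ℂ H // ∀ u ∈ L, u ≠ 0 → ((inner ℂ (T u) u : ℂ)).re < 0},
    Module.rank ℂ L.1

/-- `countAbove T lam` : the dimension of the spectral subspace for `(lam,∞)` of a bounded
self-adjoint operator, expressed variationally. -/
noncomputable def countAbove {H : Type*} [NormedAddCommGroup H] [InnerProductSpace ℂ H]
    (T : H →L[ℂ] H) (lam : ℝ) : Cardinal :=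
  ⨆ L : {L : Submodule ℂ H // ∀ u ∈ L, u ≠ 0 → lam * ‖u‖ ^ 2 < ((inner ℂ (T u) u : ℂ)).re},
    Module.rank ℂ L.1

theorem birman_schwinger_reduction
    {α : Type*} [MeasurableSpace α] (μ : Measure α)
    (Δ : α → ℝ) (hΔmeas : Measurable Δ)
    (c : ℝ) (hc : 0 < c) (hΔlow : ∀ᵐ x ∂μ, c ≤ Δ x)
    (M : ℝ) (hΔbdd : ∀ᵐ x ∂μ, Δ x ≤ M)
    (A Ai K : Lp ℂ 2 μ →L[ℂ] Lp ℂ 2 μ)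
    (hA : ∀ f : Lp ℂ 2 μ, (A f : α → ℂ) =ᵐ[μ] fun x => (Δ x : ℂ) * f x)
    (hAi : ∀ f : Lp ℂ 2 μ, (Ai f : α → ℂ) =ᵐ[μ] fun x => ((Δ x ^ (-(1 / 2) : ℝ) : ℝ) : ℂ) * f x)
    (hK : IsCompactOperator K) (hKsa : IsSelfAdjoint K)
    (S T : Lp ℂ 2 μ →L[ℂ] Lp ℂ 2 μ)
    (hS : S = A + K) (hT : T = -(Ai ∘L K ∘L Ai)) :
    IsCompactOperator T ∧ IsSelfAdjoint T ∧
      Ai ∘L S ∘L Ai = 1 - T ∧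
      negCount S = countAbove T 1 := by
  have hpos : ∀ᵐ x ∂μ, 0 < Δ x := hΔlow.mono fun x hx => lt_of_lt_of_le hc hx
  set M' : ℝ := max M c with hM'def
  have hM'pos : 0 < M' := lt_of_lt_of_le hc (le_max_right _ _)
  have hΔbdd' : ∀ᵐ x ∂μ, Δ x ≤ M' := hΔbdd.mono fun x hx => le_trans hx (le_max_left _ _)
  -- Injectivity of Ai
  have hAiInj : Function.Injective Ai := by
    intro f g hfg
    have h0 : Ai (f - g) = 0 := by rw [map_sub, hfg, sub_self]
    have h1 : ((f - g : Lp ℂ 2 μ) : α → ℂ) =ᵐ[μ] 0 := by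
      have h2 := hAi (f - g)
      rw [h0] at h2
      have h3 := Lp.coeFn_zero ℂ 2 μ
      filter_upwards [h2, h3, hpos] with x h2 h3 hx
      have : ((Δ x ^ (-(1 / 2) : ℝ) : ℝ) : ℂ) * (f - g : Lp ℂ 2 μ) x = 0 := by
        rw [← h2, h3]; rfl
      have hne : ((Δ x ^ (-(1 / 2) : ℝ) : ℝ) : ℂ) ≠ 0 := by
        simp only [ne_eq, Complex.ofReal_eq_zero]
        exact ne_of_gt (Real.rpow_pos_of_pos hx _)
      have := mul_eq_zero.mp this
      tauto
    have : f - g = 0 := Lp.ext (h1.trans (Lp.coeFn_zero ℂ 2 μ).symm)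
    exact sub_eq_zero.mp this
  -- Surjectivity of Ai
  have hAiSurj : Function.Surjective Ai := by
    intro g
    set h : α → ℂ := fun x => ((Δ x ^ ((1 / 2) : ℝ) : ℝ) : ℂ) * g x with hh
    have hmeas : AEStronglyMeasurable h μ := by
      apply AEStronglyMeasurable.mul
      · exact (Complex.measurable_ofReal.comp
          (hΔmeas.pow_const _)).aestronglyMeasurable
      · exact Lp.aestronglyMeasurable g
    have hbd : ∀ᵐ x ∂μ, ‖h x‖ ≤ M' ^ ((1 / 2) : ℝ) * ‖g x‖ := by
      filter_upwards [hpos, hΔbdd'] with x hx hx'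
      have h1 : ‖h x‖ = Δ x ^ ((1 / 2) : ℝ) * ‖g x‖ := by
        rw [hh]
        simp only [norm_mul, Complex.norm_real, Real.norm_eq_abs,
          abs_of_pos (Real.rpow_pos_of_pos hx _)]
      rw [h1]
      exact mul_le_mul_of_nonneg_right
        (Real.rpow_le_rpow (le_of_lt hx) hx' (by norm_num)) (norm_nonneg _)
    have hmem : MemLp h 2 μ := MemLp.of_le_mul (Lp.memLp g) hmeas hbd
    refine ⟨hmem.toLp h, ?_⟩
    apply Lp.ext
    filter_upwards [hAi (hmem.toLp h), hmem.coeFn_toLp, hpos] with x h1 h2 h3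
    rw [h1, h2, hh]
    have key : Δ x ^ (-(1 / 2) : ℝ) * Δ x ^ ((1 / 2) : ℝ) = 1 := by
      rw [← Real.rpow_add h3]
      norm_num
    calc ((Δ x ^ (-(1 / 2) : ℝ) : ℝ) : ℂ) * (((Δ x ^ ((1 / 2) : ℝ) : ℝ) : ℂ) * g x)
        = ((Δ x ^ (-(1 / 2) : ℝ) * Δ x ^ ((1 / 2) : ℝ) : ℝ) : ℂ) * g x := by push_cast; ring
      _ = g x := by rw [key]; simp
  -- Symmetry of Ai
  have hAisym : ∀ f g : Lp ℂ 2 μ, (inner ℂ (Ai f) g : ℂ) = inner ℂ f (Ai g) := by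
    intro f g
    rw [L2.inner_def, L2.inner_def]
    apply integral_congr_ae
    filter_upwards [hAi f, hAi g] with x h1 h2
    rw [h1, h2, RCLike.inner_apply, RCLike.inner_apply, map_mul, Complex.conj_ofReal]
    ring
  have hAiSA : IsSelfAdjoint Ai :=
    ContinuousLinearMap.isSelfAdjoint_iff_isSymmetric.mpr fun x y => hAisym x y
  -- T is self-adjoint
  have hTsa : IsSelfAdjoint T := by
    rw [hT]
    have h1 : IsSelfAdjoint (Ai * K * star Ai) := hKsa.conjugate Ai
    rw [hAiSA.star_eq, mul_assoc] at h1
    exact h1.neg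
  -- T is compact
  have hTcpt : IsCompactOperator T := by
    rw [hT]
    have h1 : IsCompactOperator (⇑K ∘ ⇑Ai) := hK.comp_clm Ai
    have h2 : IsCompactOperator (⇑Ai ∘ (⇑K ∘ ⇑Ai)) := h1.continuous_comp Ai.continuous
    have h3 : IsCompactOperator (Ai ∘L K ∘L Ai) := h2
    exact h3.neg
  -- Ai ∘ A ∘ Ai = 1
  have hASA : Ai ∘L A ∘L Ai = 1 := by
    ext f
    simp only [ContinuousLinearMap.comp_apply, ContinuousLinearMap.one_apply]
    filter_upwards [hAi f, hA (Ai f), hAi (A (Ai f)), hpos] with x h1 h2 h3 hx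
    rw [h3, h2, h1]
    have hne : Δ x ≠ 0 := ne_of_gt hx
    have haa : Δ x ^ (-(1 / 2) : ℝ) * Δ x ^ (-(1 / 2) : ℝ) = (Δ x)⁻¹ := by
      rw [← Real.rpow_add hx]
      norm_num [Real.rpow_neg_one]
    have key : Δ x ^ (-(1 / 2) : ℝ) * (Δ x * Δ x ^ (-(1 / 2) : ℝ)) = 1 := by
      rw [mul_comm (Δ x), ← mul_assoc, haa, inv_mul_cancel₀ hne]
    calc ((Δ x ^ (-(1 / 2) : ℝ) : ℝ) : ℂ) * ((Δ x : ℂ) * (((Δ x ^ (-(1 / 2) : ℝ) : ℝ) : ℂ) * f x))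
        = ((Δ x ^ (-(1 / 2) : ℝ) * (Δ x * Δ x ^ (-(1 / 2) : ℝ)) : ℝ) : ℂ) * f x := by
          push_cast; ring
      _ = f x := by rw [key]; simp
  -- Ai ∘ S ∘ Ai = 1 - T
  have hconj : Ai ∘L S ∘L Ai = 1 - T := by
    rw [hS, hT]
    have h1 : Ai ∘L (A + K) ∘L Ai = Ai ∘L A ∘L Ai + Ai ∘L K ∘L Ai := by
      ext f; simp
    rw [h1, hASA, sub_neg_eq_add]
  -- key quadratic form identity
  have hkey : ∀ u : Lp ℂ 2 μ,
      ((inner ℂ (S (Ai u)) (Ai u) : ℂ)).re = ‖u‖ ^ 2 - ((inner ℂ (T u) u : ℂ)).re := by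
    intro u
    have h1 : (inner ℂ (S (Ai u)) (Ai u) : ℂ) = inner ℂ ((Ai ∘L S ∘L Ai) u) u := by
      simp only [ContinuousLinearMap.comp_apply]
      exact (hAisym (S (Ai u)) u).symm
    rw [h1, hconj]
    have h2 : ((1 - T : Lp ℂ 2 μ →L[ℂ] Lp ℂ 2 μ)) u = u - T u := by simp
    rw [h2, inner_sub_left]
    have h3 : ((inner ℂ u u : ℂ)).re = ‖u‖ ^ 2 := by
      have := @inner_self_eq_norm_sq ℂ _ _ _ _ u
      simpa [RCLike.re_to_complex] using this
    rw [Complex.sub_re, h3]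
  -- the bijection
  let e : Lp ℂ 2 μ ≃ₗ[ℂ] Lp ℂ 2 μ :=
    LinearEquiv.ofBijective (Ai : Lp ℂ 2 μ →ₗ[ℂ] Lp ℂ 2 μ) ⟨hAiInj, hAiSurj⟩
  have he : ∀ u, e u = Ai u := fun u => rfl
  refine ⟨hTcpt, hTsa, hconj, ?_⟩
  -- counting
  rw [negCount, countAbove]
  haveI hne1 : Nonempty {L : Submodule ℂ (Lp ℂ 2 μ) //
      ∀ u ∈ L, u ≠ 0 → ((inner ℂ (S u) u : ℂ)).re < 0} :=
    ⟨⊥, fun u hu hne => absurd ((Submodule.mem_bot ℂ).mp hu) hne⟩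
  haveI hne2 : Nonempty {L : Submodule ℂ (Lp ℂ 2 μ) //
      ∀ u ∈ L, u ≠ 0 → 1 * ‖u‖ ^ 2 < ((inner ℂ (T u) u : ℂ)).re} :=
    ⟨⊥, fun u hu hne => absurd ((Submodule.mem_bot ℂ).mp hu) hne⟩
  have hbdd1 : BddAbove (Set.range fun L : {L : Submodule ℂ (Lp ℂ 2 μ) //
      ∀ u ∈ L, u ≠ 0 → ((inner ℂ (S u) u : ℂ)).re < 0} => Module.rank ℂ L.1) := by
    refine ⟨Module.rank ℂ (Lp ℂ 2 μ), ?_⟩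
    rintro x ⟨L, rfl⟩
    exact Submodule.rank_le L.1
  have hbdd2 : BddAbove (Set.range fun L : {L : Submodule ℂ (Lp ℂ 2 μ) //
      ∀ u ∈ L, u ≠ 0 → 1 * ‖u‖ ^ 2 < ((inner ℂ (T u) u : ℂ)).re} => Module.rank ℂ L.1) := by
    refine ⟨Module.rank ℂ (Lp ℂ 2 μ), ?_⟩
    rintro x ⟨L, rfl⟩
    exact Submodule.rank_le L.1
  apply le_antisymm
  · refine ciSup_le fun L => ?_
    refine le_ciSup_of_le hbdd2 ⟨Submodule.map e.symm.toLinearMap L.1, ?_⟩ ?_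
    · rintro u hu hune
      obtain ⟨v, hv, rfl⟩ := hu
      have hAiu : Ai (e.symm.toLinearMap v) = v := by
        rw [← he]; exact e.apply_symm_apply v
      have hAine : Ai (e.symm.toLinearMap v) ≠ 0 := by
        rw [hAiu]
        intro h0
        apply hune
        rw [h0] at hAiu ⊢
        simp [h0]
      have := L.2 (Ai (e.symm.toLinearMap v)) (by rw [hAiu]; exact hv) hAine
      rw [hkey] at this
      linarith
    · exact le_of_eq (LinearEquiv.rank_eq
        (Submodule.equivMapOfInjective e.symm.toLinearMap e.symm.injective L.1))
  · refine ciSup_le fun L => ?_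
    refine le_ciSup_of_le hbdd1 ⟨Submodule.map (Ai : Lp ℂ 2 μ →ₗ[ℂ] Lp ℂ 2 μ) L.1, ?_⟩ ?_
    · rintro u hu hune
      obtain ⟨v, hv, rfl⟩ := hu
      have hvne : v ≠ 0 := by
        intro h0
        apply hune
        rw [h0]
        simp
      have := L.2 v hv hvne
      rw [show ((Ai : Lp ℂ 2 μ →ₗ[ℂ] Lp ℂ 2 μ) v) = Ai v from rfl, hkey]
      linarith
    · exact le_of_eq (LinearEquiv.rank_eq
        (Submodule.equivMapOfInjective (Ai : Lp ℂ 2 μ →ₗ[ℂ] Lp ℂ 2 μ) hAiInj L.1))
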